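/- Let f : ℝᴰ → ℝ be twice differentiable and nonnegative, with ‖∇²f(θ)‖₂ ≤ H₁·f(θ) for all θ (Euclidean case H₀ = 0, H₁ > 0). Then the map θ ↦ ∇f(θ)/f(θ) is 2H₁-Lipschitz: for all x, y, ‖∇f(y)/f(y) − ∇f(x)/f(x)‖₂ ≤ 2·H₁·‖y − x‖₂. -/

import Mathlib

open scoped BigOperators

noncomputable def lpNorm (p : ENNReal) {ι : Type*} [Fintype ι] (x : ι → ℝ) : ℝ :=
  ‖(WithLp.equiv p (ι → ℝ)).symm x‖

noncomputable def opNorm (p q : ENNReal) {ι κ : Type*} [Fintype ι] [Fintype κ]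
    (A : Matrix ι κ ℝ) : ℝ :=
  sSup {c | ∃ x : κ → ℝ, lpNorm p x ≤ 1 ∧ c = lpNorm q (A.mulVec x)}

noncomputable def dotCLM {n : ℕ} (v : Fin n → ℝ) : (Fin n → ℝ) →L[ℝ] ℝ :=
  LinearMap.toContinuousLinearMap (∑ i, v i • (LinearMap.proj i : (Fin n → ℝ) →ₗ[ℝ] ℝ))

noncomputable def mulVecCLM {m n : ℕ} (M : Matrix (Fin m) (Fin n) ℝ) :
    (Fin n → ℝ) →L[ℝ] (Fin m → ℝ) :=
  LinearMap.toContinuousLinearMap M.mulVecLin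


lemma oneDim (H1 : ℝ) (hH1 : 0 < H1) (u u' u'' : ℝ → ℝ)
    (hu : ∀ t, HasDerivAt u (u' t) t) (hu' : ∀ t, HasDerivAt u' (u'' t) t)
    (hpos : ∀ t, 0 < u t) (hb : ∀ t, u'' t ≤ H1 * u t) :
    -(Real.sqrt H1) * u 0 ≤ u' 0 := by
  by_contra hcon
  push_neg at hcon
  set c := Real.sqrt H1 with hcdef
  have hcpos : 0 < c := Real.sqrt_pos.mpr hH1
  have hc2 : c * c = H1 := Real.mul_self_sqrt hH1.le
  set v : ℝ → ℝ := fun t => u' t + c * u t with hvdef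
  have hvd : ∀ t, HasDerivAt v (u'' t + c * u' t) t := fun t => (hu' t).add ((hu t).const_mul c)
  have hv0 : v 0 < 0 := by
    have : u' 0 < -c * u 0 := hcon
    simp only [hvdef]; linarith
  -- step 1 : v t ≤ exp (c*t) * v 0 for t ≥ 0
  set φ : ℝ → ℝ := fun t => Real.exp (-(c * t)) * v t with hφdef
  have hφd : ∀ t, HasDerivAt φ (Real.exp (-(c * t)) * (u'' t - H1 * u t)) t := by
    intro t
    have h1 : HasDerivAt (fun t : ℝ => Real.exp (-(c * t))) (-c * Real.exp (-(c * t))) t := by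
      have h2 : HasDerivAt (fun t : ℝ => -(c * t)) (-c) t := by
        refine (((hasDerivAt_id t).const_mul c).neg).congr_deriv ?_; simp
      simpa [mul_comm] using h2.exp
    have h3 := h1.mul (hvd t)
    refine h3.congr_deriv ?_
    simp only [hvdef]; ring_nf
    rw [← hc2]; ring
  have hφmono : AntitoneOn φ (Set.Ici (0:ℝ)) := by
    apply antitoneOn_of_deriv_nonpos (convex_Ici 0)
    · exact fun t _ => ((hφd t).continuousAt).continuousWithinAt
    · exact fun t _ => ((hφd t).differentiableAt).differentiableWithinAt
    · intro t _
      rw [(hφd t).deriv]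
      have : u'' t - H1 * u t ≤ 0 := by linarith [hb t]
      exact mul_nonpos_of_nonneg_of_nonpos (Real.exp_nonneg _) this
  have hvle : ∀ t ≥ (0:ℝ), v t ≤ Real.exp (c * t) * v 0 := by
    intro t ht
    have := hφmono (Set.self_mem_Ici) (Set.mem_Ici.mpr ht) ht
    simp only [hφdef, mul_zero, neg_zero, Real.exp_zero, one_mul] at this
    have he : 0 < Real.exp (-(c * t)) := Real.exp_pos _
    rw [← mul_le_mul_iff_right₀ he]
    calc Real.exp (-(c*t)) * v t ≤ v 0 := this
      _ = Real.exp (-(c*t)) * (Real.exp (c*t) * v 0) := by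
          rw [← mul_assoc, ← Real.exp_add]; simp
  -- step 2 : ψ t = exp(c t) * u t - v 0 * exp (2 c t) / (2 c) antitone on Ici 0
  set ψ : ℝ → ℝ := fun t => Real.exp (c * t) * u t - v 0 * Real.exp (2 * c * t) / (2 * c) with hψdef
  have hψd : ∀ t, HasDerivAt ψ (Real.exp (c * t) * v t - v 0 * Real.exp (2 * c * t)) t := by
    intro t
    have h1 : HasDerivAt (fun t : ℝ => Real.exp (c * t)) (c * Real.exp (c * t)) t := by
      simpa [mul_comm] using (((hasDerivAt_id t).const_mul c).exp)
    have h2 : HasDerivAt (fun t : ℝ => Real.exp (2 * c * t)) (2 * c * Real.exp (2 * c * t)) t := by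
      simpa [mul_comm] using (((hasDerivAt_id t).const_mul (2*c)).exp)
    have h3 := (h1.mul (hu t)).sub (((h2.const_mul (v 0)).div_const (2 * c)))
    refine h3.congr_deriv ?_
    simp only [hvdef]
    field_simp
    ring
  have hψmono : AntitoneOn ψ (Set.Ici (0:ℝ)) := by
    apply antitoneOn_of_deriv_nonpos (convex_Ici 0)
    · exact fun t _ => ((hψd t).continuousAt).continuousWithinAt
    · exact fun t _ => ((hψd t).differentiableAt).differentiableWithinAt
    · intro t ht
      rw [interior_Ici] at ht
      rw [(hψd t).deriv]
      have h4 := hvle t (le_of_lt ht)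
      have he : 0 < Real.exp (c * t) := Real.exp_pos _
      have : Real.exp (c*t) * v t ≤ Real.exp (c*t) * (Real.exp (c*t) * v 0) :=
        (mul_le_mul_iff_right₀ he).mpr h4
      have h5 : Real.exp (c*t) * (Real.exp (c*t) * v 0) = v 0 * Real.exp (2*c*t) := by
        rw [← mul_assoc, ← Real.exp_add]; ring_nf
      linarith
  -- step 3 : choose t large
  set t0 : ℝ := u 0 / (-(v 0)) + 1 with ht0def
  have hvneg : 0 < -(v 0) := by linarith
  have ht0 : (0:ℝ) ≤ t0 := by
    have h : 0 ≤ u 0 / (-(v 0)) := div_nonneg (hpos 0).le hvneg.le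
    rw [ht0def]; linarith
  have hψle := hψmono (Set.self_mem_Ici) (Set.mem_Ici.mpr ht0) ht0
  have hexp : 2 * c * t0 + 1 ≤ Real.exp (2 * c * t0) := Real.add_one_le_exp _
  -- v 0 * exp(2 c t0) ≤ v 0 * (2 c t0 + 1)
  have h6 : v 0 * Real.exp (2 * c * t0) ≤ v 0 * (2 * c * t0 + 1) := by
    nlinarith
  have h7 : v 0 * (2 * c * t0) = -(2 * c * u 0) + 2 * c * v 0 := by
    rw [ht0def]; field_simp
    rw [mul_add, mul_neg, mul_div_assoc', mul_div_cancel_left₀ (u 0) hv0.ne, mul_one]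
  have hψ0 : ψ 0 = u 0 - v 0 / (2 * c) := by simp [hψdef]
  have hψt : Real.exp (c * t0) * u t0 - v 0 * Real.exp (2*c*t0) / (2*c) ≤ u 0 - v 0 / (2*c) := by
    rw [← hψ0]; exact hψle
  have hut : 0 < Real.exp (c * t0) * u t0 := mul_pos (Real.exp_pos _) (hpos t0)
  have h8 : v 0 * Real.exp (2*c*t0) / (2*c) ≤ (v 0 * (2*c*t0) + v 0) / (2*c) := by
    apply div_le_div_of_nonneg_right ?_ (by linarith)
    linarith
  -- from hψt : exp(c t0) u t0 ≤ u 0 - v0/(2c) + v0*exp(2c t0)/(2c)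
  have h9 : Real.exp (c * t0) * u t0 ≤ u 0 - v 0/(2*c) + (v 0 * (2*c*t0) + v 0)/(2*c) := by
    linarith
  have h10 : u 0 - v 0/(2*c) + (v 0 * (2*c*t0) + v 0)/(2*c) = v 0 := by
    rw [h7]; field_simp; ring
  linarith [h9, h10.symm ▸ h9]

lemma lpNorm_nonneg' {ι : Type*} [Fintype ι] (x : ι → ℝ) : 0 ≤ lpNorm 2 x := norm_nonneg _

lemma cs_lemma {ι : Type*} [Fintype ι] (a b : ι → ℝ) : |∑ i, a i * b i| ≤ lpNorm 2 a * lpNorm 2 b := by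
  have := abs_real_inner_le_norm ((WithLp.equiv 2 (ι → ℝ)).symm a) ((WithLp.equiv 2 (ι → ℝ)).symm b)
  simpa [lpNorm, PiLp.inner_apply, RCLike.inner_apply, mul_comm] using this

lemma lpNorm_smul {ι : Type*} [Fintype ι] (c : ℝ) (a : ι → ℝ) :
    lpNorm 2 (c • a) = |c| * lpNorm 2 a := by simp [lpNorm, norm_smul]

lemma lpNorm_le_sum {D : ℕ} (y : Fin D → ℝ) : lpNorm 2 y ≤ ∑ i, |y i| := by
  rw [lpNorm, EuclideanSpace.norm_eq]
  have h1 : ∑ i, ‖(WithLp.equiv 2 (Fin D → ℝ)).symm y i‖ ^ 2 ≤ (∑ i, |y i|) ^ 2 := by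
    have := Finset.sum_sq_le_sq_sum_of_nonneg (s := Finset.univ)
      (f := fun i : Fin D => ‖(WithLp.equiv 2 (Fin D → ℝ)).symm y i‖) (fun i _ => norm_nonneg _)
    simpa [Real.norm_eq_abs] using this
  calc √(∑ i, ‖(WithLp.equiv 2 (Fin D → ℝ)).symm y i‖ ^ 2) ≤ √((∑ i, |y i|) ^ 2) :=
        Real.sqrt_le_sqrt h1
    _ = ∑ i, |y i| := Real.sqrt_sq (Finset.sum_nonneg fun i _ => abs_nonneg _)

lemma bddAbove_opSet {D : ℕ} (A : Matrix (Fin D) (Fin D) ℝ) :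
    BddAbove {c | ∃ x : Fin D → ℝ, lpNorm 2 x ≤ 1 ∧ c = lpNorm 2 (A.mulVec x)} := by
  refine ⟨∑ i, lpNorm 2 (A i), ?_⟩
  rintro c ⟨x, hx, rfl⟩
  calc lpNorm 2 (A.mulVec x) ≤ ∑ i, |A.mulVec x i| := lpNorm_le_sum _
    _ ≤ ∑ i, lpNorm 2 (A i) := by
        apply Finset.sum_le_sum
        intro i _
        calc |A.mulVec x i| = |∑ j, A i j * x j| := by rw [Matrix.mulVec]; rfl
          _ ≤ lpNorm 2 (A i) * lpNorm 2 x := cs_lemma _ _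
          _ ≤ lpNorm 2 (A i) * 1 := by
              exact mul_le_mul_of_nonneg_left hx (lpNorm_nonneg' _)
          _ = lpNorm 2 (A i) := mul_one _

lemma mulVec_le_opNorm {D : ℕ} (A : Matrix (Fin D) (Fin D) ℝ) (x : Fin D → ℝ) :
    lpNorm 2 (A.mulVec x) ≤ opNorm 2 2 A * lpNorm 2 x := by
  rcases eq_or_lt_of_le (lpNorm_nonneg' x) with h0 | h0
  · have hx : x = 0 := by
      have : ‖(WithLp.equiv 2 (Fin D → ℝ)).symm x‖ = 0 := h0.symm
      have := norm_eq_zero.mp this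
      simpa using congrArg (WithLp.equiv 2 (Fin D → ℝ)) this
    simp [hx, Matrix.mulVec_zero, lpNorm, ← h0]
  · set n := lpNorm 2 x with hn
    have key : lpNorm 2 (A.mulVec (n⁻¹ • x)) ≤ opNorm 2 2 A := by
      apply le_csSup (bddAbove_opSet A)
      exact ⟨n⁻¹ • x, by rw [lpNorm_smul]; rw [abs_of_pos (inv_pos.mpr h0)]; rw [inv_mul_cancel₀ h0.ne'], rfl⟩
    rw [Matrix.mulVec_smul, lpNorm_smul, abs_of_pos (inv_pos.mpr h0)] at key
    calc lpNorm 2 (A.mulVec x) = n * (n⁻¹ * lpNorm 2 (A.mulVec x)) := by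
          field_simp
      _ ≤ n * opNorm 2 2 A := mul_le_mul_of_nonneg_left key h0.le
      _ = opNorm 2 2 A * n := mul_comm _ _

lemma dotCLM_apply {n : ℕ} (v x : Fin n → ℝ) : dotCLM v x = ∑ i, v i * x i := by simp [dotCLM]
lemma lpNorm_sq {n : ℕ} (a : Fin n → ℝ) : lpNorm 2 a ^ 2 = ∑ i, a i ^ 2 := by
  simp [lpNorm, EuclideanSpace.norm_eq]
  rw [Real.sq_sqrt]; positivity

lemma lpNorm_add_le {ι : Type*} [Fintype ι] (a b : ι → ℝ) :
    lpNorm 2 (a + b) ≤ lpNorm 2 a + lpNorm 2 b := by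
  simpa [lpNorm] using norm_add_le ((WithLp.equiv 2 (ι → ℝ)).symm a) ((WithLp.equiv 2 (ι → ℝ)).symm b)


lemma grad_bound {D : ℕ}
    (f : (Fin D → ℝ) → ℝ) (g : (Fin D → ℝ) → (Fin D → ℝ))
    (Hess : (Fin D → ℝ) → Matrix (Fin D) (Fin D) ℝ)
    (hfpos : ∀ θ, 0 < f θ)
    (hgrad : ∀ θ, HasFDerivAt f (dotCLM (g θ)) θ)
    (hhess : ∀ θ, HasFDerivAt g (mulVecCLM (Hess θ)) θ)
    (H1 : ℝ) (hH1 : 0 < H1)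
    (hnus : ∀ θ, opNorm 2 2 (Hess θ) ≤ H1 * f θ)
    (θ : Fin D → ℝ) : lpNorm 2 (g θ) ≤ Real.sqrt H1 * f θ := by
  rcases eq_or_lt_of_le (lpNorm_nonneg' (g θ)) with h0 | h0
  · rw [← h0]; exact mul_nonneg (Real.sqrt_nonneg _) (hfpos θ).le
  · set n := lpNorm 2 (g θ) with hn
    set v : Fin D → ℝ := (-n⁻¹) • g θ with hv
    have hvnorm : lpNorm 2 v = 1 := by
      rw [hv, lpNorm_smul, abs_neg, abs_of_pos (inv_pos.mpr h0), inv_mul_cancel₀ h0.ne']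
    set c : ℝ → (Fin D → ℝ) := fun t => θ + t • v with hc
    have hcd : ∀ t, HasDerivAt c v t := by
      intro t
      simpa [hc] using ((hasDerivAt_id t).smul_const v).const_add θ
    set u : ℝ → ℝ := fun t => f (c t) with hud
    set u' : ℝ → ℝ := fun t => ∑ i, g (c t) i * v i with hu'd
    set u'' : ℝ → ℝ := fun t => ∑ i, v i * ((Hess (c t)).mulVec v) i with hu''d
    have hu : ∀ t, HasDerivAt u (u' t) t := by
      intro t
      have h1 := (hgrad (c t)).comp_hasDerivAt t (hcd t)
      simpa [hu'd, hud, dotCLM_apply, Function.comp_def] using h1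
    have hu' : ∀ t, HasDerivAt u' (u'' t) t := by
      intro t
      have h1 := (hhess (c t)).comp_hasDerivAt t (hcd t)
      have h2 := ((dotCLM v).hasFDerivAt.comp_hasDerivAt t h1)
      have h3 : (⇑(dotCLM v) ∘ g ∘ c) = u' := by
        funext s
        simp only [Function.comp_apply]
        rw [dotCLM_apply, hu'd]
        exact Finset.sum_congr rfl fun i _ => mul_comm _ _
      rw [h3] at h2
      have h4 : dotCLM v (mulVecCLM (Hess (c t)) v) = u'' t := by
        rw [dotCLM_apply]; rfl
      rwa [h4] at h2
    have hpos : ∀ t, 0 < u t := fun t => hfpos (c t)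
    have hb : ∀ t, u'' t ≤ H1 * u t := by
      intro t
      have h1 : u'' t ≤ |∑ i, v i * ((Hess (c t)).mulVec v) i| := le_abs_self _
      have h2 := cs_lemma v ((Hess (c t)).mulVec v)
      have h3 : lpNorm 2 ((Hess (c t)).mulVec v) ≤ opNorm 2 2 (Hess (c t)) := by
        apply le_csSup (bddAbove_opSet _)
        exact ⟨v, le_of_eq hvnorm, rfl⟩
      have h4 := hnus (c t)
      calc u'' t ≤ lpNorm 2 v * lpNorm 2 ((Hess (c t)).mulVec v) := le_trans h1 h2
        _ = lpNorm 2 ((Hess (c t)).mulVec v) := by rw [hvnorm, one_mul]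
        _ ≤ H1 * f (c t) := le_trans h3 h4
    have key := oneDim H1 hH1 u u' u'' hu hu' hpos hb
    have hc0 : c 0 = θ := by simp [hc]
    have hu0 : u 0 = f θ := by rw [hud]; simp [hc0]
    have hu'0 : u' 0 = -n := by
      rw [hu'd]
      simp only [hc0, hv]
      have : ∀ i, g θ i * ((-n⁻¹) • g θ) i = -n⁻¹ * (g θ i ^ 2) := by
        intro i; simp [Pi.smul_apply, smul_eq_mul]; ring
      rw [Finset.sum_congr rfl fun i _ => this i, ← Finset.mul_sum, ← lpNorm_sq]
      rw [← hn]
      field_simp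
    rw [hu0, hu'0] at key
    nlinarith [Real.sqrt_nonneg H1, hfpos θ]

/-- Euclidean case: if ‖∇²f(θ)‖₂ ≤ H₁ f(θ) and f > 0, then θ ↦ ∇f(θ)/f(θ) is 2H₁-Lipschitz. -/
theorem stmt6 {D : ℕ}
    (f : (Fin D → ℝ) → ℝ) (g : (Fin D → ℝ) → (Fin D → ℝ))
    (Hess : (Fin D → ℝ) → Matrix (Fin D) (Fin D) ℝ)
    (hfpos : ∀ θ, 0 < f θ)
    (hgrad : ∀ θ, HasFDerivAt f (dotCLM (g θ)) θ)
    (hhess : ∀ θ, HasFDerivAt g (mulVecCLM (Hess θ)) θ)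
    (H1 : ℝ) (hH1 : 0 < H1)
    (hnus : ∀ θ, opNorm 2 2 (Hess θ) ≤ H1 * f θ) :
    ∀ x y, lpNorm 2 (fun i => g y i / f y - g x i / f x) ≤ 2 * H1 * lpNorm 2 (y - x) := by
  intro x y
  set E := EuclideanSpace ℝ (Fin D) with hE
  let ι : E ≃L[ℝ] (Fin D → ℝ) := EuclideanSpace.equiv (Fin D) ℝ
  set p : (Fin D → ℝ) → (Fin D → ℝ) := fun θ => (f θ)⁻¹ • g θ with hp
  set L : (Fin D → ℝ) → ((Fin D → ℝ) →L[ℝ] (Fin D → ℝ)) := fun θ =>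
    (f θ)⁻¹ • mulVecCLM (Hess θ) + ((-(f θ ^ 2)⁻¹) • dotCLM (g θ)).smulRight (g θ) with hL
  have hpd : ∀ θ, HasFDerivAt p (L θ) θ := by
    intro θ
    have hinv : HasFDerivAt (fun θ => (f θ)⁻¹) ((-(f θ ^ 2)⁻¹) • dotCLM (g θ)) θ :=
      (hasDerivAt_inv (hfpos θ).ne').comp_hasFDerivAt θ (hgrad θ)
    exact hinv.smul (hhess θ)
  set h : E → E := fun w => ι.symm (p (ι w)) with hh
  set DD : E → (E →L[ℝ] E) := fun w =>
    ((ι.symm : (Fin D → ℝ) →L[ℝ] E).comp ((L (ι w)).comp (ι : E →L[ℝ] (Fin D → ℝ)))) with hDD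
  have hhd : ∀ w : E, HasFDerivAt h (DD w) w := by
    intro w
    exact ((ι.symm : (Fin D → ℝ) →L[ℝ] E).hasFDerivAt.comp _
      ((hpd (ι w)).comp w (ι : E →L[ℝ] (Fin D → ℝ)).hasFDerivAt))
  have hnormι : ∀ (z : Fin D → ℝ), ‖(ι.symm : (Fin D → ℝ) →L[ℝ] E) z‖ = lpNorm 2 z := fun z => rfl
  have hιnorm : ∀ (w : E), lpNorm 2 (ι w) = ‖w‖ := fun w => rfl
  have hbound : ∀ w : E, ‖DD w‖ ≤ 2 * H1 := by
    intro w
    apply ContinuousLinearMap.opNorm_le_bound _ (by positivity)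
    intro w'
    set θ := ι w with hθ
    set xv := ι w' with hxv
    have happ : DD w w' = (ι.symm : (Fin D → ℝ) →L[ℝ] E) (L θ xv) := rfl
    rw [happ, hnormι]
    have hLval : L θ xv = (f θ)⁻¹ • ((Hess θ).mulVec xv)
        + ((-(f θ ^ 2)⁻¹) * (dotCLM (g θ) xv)) • g θ := rfl
    rw [hLval]
    have t1 : lpNorm 2 ((f θ)⁻¹ • ((Hess θ).mulVec xv)) ≤ H1 * lpNorm 2 xv := by
      rw [lpNorm_smul, abs_of_pos (inv_pos.mpr (hfpos θ))]
      have h1 := mulVec_le_opNorm (Hess θ) xv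
      have h2 := hnus θ
      have h3 : opNorm 2 2 (Hess θ) * lpNorm 2 xv ≤ H1 * f θ * lpNorm 2 xv :=
        mul_le_mul_of_nonneg_right h2 (lpNorm_nonneg' _)
      have h4 : (f θ)⁻¹ * lpNorm 2 ((Hess θ).mulVec xv) ≤ (f θ)⁻¹ * (H1 * f θ * lpNorm 2 xv) :=
        mul_le_mul_of_nonneg_left (le_trans h1 h3) (inv_pos.mpr (hfpos θ)).le
      calc (f θ)⁻¹ * lpNorm 2 ((Hess θ).mulVec xv) ≤ (f θ)⁻¹ * (H1 * f θ * lpNorm 2 xv) := h4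
        _ = H1 * lpNorm 2 xv := by field_simp [(hfpos θ).ne']
    have t2 : lpNorm 2 (((-(f θ ^ 2)⁻¹) * (dotCLM (g θ) xv)) • g θ) ≤ H1 * lpNorm 2 xv := by
      rw [lpNorm_smul, abs_mul, abs_neg, abs_inv]
      rw [dotCLM_apply]
      have hcs := cs_lemma (g θ) xv
      have hgb := grad_bound f g Hess hfpos hgrad hhess H1 hH1 hnus θ
      have hsq : Real.sqrt H1 * Real.sqrt H1 = H1 := Real.mul_self_sqrt hH1.le
      have hfp := hfpos θ
      have habs : |f θ ^ 2| = f θ ^ 2 := abs_of_pos (by positivity)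
      rw [habs]
      have hgn := lpNorm_nonneg' (g θ)
      have hxn := lpNorm_nonneg' xv
      have habs2 : |∑ i, g θ i * xv i| ≤ Real.sqrt H1 * f θ * lpNorm 2 xv := by
        calc |∑ i, g θ i * xv i| ≤ lpNorm 2 (g θ) * lpNorm 2 xv := hcs
          _ ≤ Real.sqrt H1 * f θ * lpNorm 2 xv :=
              mul_le_mul_of_nonneg_right hgb hxn
      calc (f θ ^ 2)⁻¹ * |∑ i, g θ i * xv i| * lpNorm 2 (g θ)
          ≤ (f θ ^ 2)⁻¹ * (Real.sqrt H1 * f θ * lpNorm 2 xv) * (Real.sqrt H1 * f θ) := by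
            apply mul_le_mul
            · exact mul_le_mul_of_nonneg_left habs2 (by positivity)
            · exact hgb
            · exact hgn
            · positivity
        _ = H1 * lpNorm 2 xv := by
            have e : (f θ ^ 2)⁻¹ * (Real.sqrt H1 * f θ * lpNorm 2 xv) * (Real.sqrt H1 * f θ)
                = (Real.sqrt H1 * Real.sqrt H1) * lpNorm 2 xv * (f θ ^ 2 * (f θ ^ 2)⁻¹) := by ring
            rw [e, hsq, mul_inv_cancel₀ (pow_ne_zero 2 (hfpos θ).ne'), mul_one]
    calc lpNorm 2 ((f θ)⁻¹ • ((Hess θ).mulVec xv)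
        + ((-(f θ ^ 2)⁻¹) * (dotCLM (g θ) xv)) • g θ)
        ≤ lpNorm 2 ((f θ)⁻¹ • ((Hess θ).mulVec xv))
          + lpNorm 2 (((-(f θ ^ 2)⁻¹) * (dotCLM (g θ) xv)) • g θ) := lpNorm_add_le _ _
      _ ≤ H1 * lpNorm 2 xv + H1 * lpNorm 2 xv := add_le_add t1 t2
      _ = 2 * H1 * lpNorm 2 xv := by ring
      _ = 2 * H1 * ‖w'‖ := by rw [hιnorm]
  -- mean value inequality on univ
  have mvt := (convex_univ (𝕜 := ℝ) (E := E)).norm_image_sub_le_of_norm_hasFDerivWithin_le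
    (fun w _ => (hhd w).hasFDerivWithinAt) (fun w _ => hbound w)
    (Set.mem_univ (ι.symm x)) (Set.mem_univ (ι.symm y))
  have e1 : h (ι.symm y) - h (ι.symm x)
      = (WithLp.equiv 2 (Fin D → ℝ)).symm (fun i => g y i / f y - g x i / f x) := by
    ext i
    show p (ι (ι.symm y)) i - p (ι (ι.symm x)) i = g y i / f y - g x i / f x
    rw [ι.apply_symm_apply, ι.apply_symm_apply]
    simp [hp, div_eq_inv_mul, mul_comm]
  have e2 : (ι.symm y - ι.symm x : E) = (WithLp.equiv 2 (Fin D → ℝ)).symm (y - x) := rfl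
  rw [e1, e2] at mvt
  exact mvt
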